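/- Let δ ≥ 1 be an integer, let 𝐮 be a Sturmian sequence over {a, b}, and let 𝐱 = colour(𝐮, (12⋯δ)^ω, (1′2′⋯δ′)^ω). If w is a bispecial factor of 𝐱 whose projection π(w) contains both letters a and b, then π(w) is a bispecial factor of 𝐮. -/

import Mathlib

open Filter
open scoped ENNReal

namespace BalancedCE

variable {α : Type*} {β : Type*}

/-- The factor of `v` of length `n` starting at position `i`. -/
def factorAt (v : ℕ → α) (i n : ℕ) : List α := (List.range n).map fun k => v (i + k)

/-- `u` is a factor of the sequence `v`. -/
def IsFactor (v : ℕ → α) (u : List α) : Prop := ∃ i, factorAt v i u.length = u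

/-- The word `w` occurs in the sequence `v` at position `i`. -/
def OccursAt (v : ℕ → α) (w : List α) (i : ℕ) : Prop := factorAt v i w.length = w

/-- A sequence is balanced if counts of each letter in equal-length factors differ by at most 1. -/
def Balanced [DecidableEq α] (v : ℕ → α) : Prop :=
  ∀ (a : α) (u w : List α), IsFactor v u → IsFactor v w → u.length = w.length →
    |(u.count a : ℤ) - (w.count a : ℤ)| ≤ 1

def EventuallyPeriodic (v : ℕ → α) : Prop :=
  ∃ p, 0 < p ∧ ∃ N, ∀ n, N ≤ n → v (n + p) = v n

def Recurrent (v : ℕ → α) : Prop :=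
  ∀ u : List α, IsFactor v u → ∀ N : ℕ, ∃ i, N ≤ i ∧ OccursAt v u i

/-- `i < j` are consecutive occurrences of the letter `a` in `v`. -/
def ConsecOcc (v : ℕ → α) (a : α) (i j : ℕ) : Prop :=
  i < j ∧ v i = a ∧ v j = a ∧ ∀ k, i < k → k < j → v k ≠ a

/-- `p` is a period of the finite word `z` (i.e. `z` is a prefix of `u^ω` with `|u| = p`). -/
def IsPeriod (z : List α) (p : ℕ) : Prop :=
  0 < p ∧ ∀ i, i + p < z.length → z[i]? = z[i + p]?

/-- The minimal period of a finite word. -/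
noncomputable def minPeriod (z : List α) : ℕ := sInf {p | IsPeriod z p}

/-- The exponent of a finite word: its length divided by its minimal period. -/
noncomputable def expE (z : List α) : ℝ≥0∞ := (z.length : ℝ≥0∞) / (minPeriod z : ℝ≥0∞)

/-- The critical exponent of a sequence: the supremum of exponents of nonempty factors. -/
noncomputable def criticalExponent (v : ℕ → α) : ℝ≥0∞ :=
  ⨆ (z : List α) (_ : IsFactor v z ∧ z ≠ []), expE z

/-- A Pansiot sequence over a `d`-letter alphabet. -/
def Pansiot (d : ℕ) (v : ℕ → α) : Prop :=
  (∀ i : ℕ, (factorAt v i (d - 1)).Nodup) ∧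
  ∀ (a : α) (i j : ℕ), ConsecOcc v a i j → v (i + 1) ≠ v (j + 1)

/-- The letter `a` has frequency `ρ` in the sequence `v`. -/
def HasFreq [DecidableEq α] (v : ℕ → α) (a : α) (ρ : ℝ) : Prop :=
  Tendsto (fun n => ((factorAt v 0 n).count a : ℝ) / n) atTop (nhds ρ)

/-- Factor complexity of a sequence. -/
noncomputable def complexity (v : ℕ → α) (n : ℕ) : ℕ :=
  Set.ncard {u : List α | IsFactor v u ∧ u.length = n}

/-- Sturmian sequences: aperiodic binary sequences of factor complexity `n + 1`.
Convention: the letter `a` is `false`, the letter `b` is `true`. -/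
def Sturmian (u : ℕ → Bool) : Prop :=
  ¬ EventuallyPeriodic u ∧ ∀ n, complexity u n = n + 1

/-- Prepending a letter to a sequence. -/
def consSeq (c : α) (v : ℕ → α) : ℕ → α := fun n =>
  match n with
  | 0 => c
  | Nat.succ m => v m

/-- A standard sequence: a Sturmian sequence `u` such that `a·u` and `b·u` are Sturmian. -/
def IsStandard (u : ℕ → Bool) : Prop :=
  Sturmian u ∧ Sturmian (consSeq false u) ∧ Sturmian (consSeq true u)

/-- The slope of a binary sequence, with the convention `ρ_b > ρ_a` (`a = false`, `b = true`). -/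
def HasSlope (u : ℕ → Bool) (θ : ℝ) : Prop :=
  ∃ ρa ρb : ℝ, HasFreq u false ρa ∧ HasFreq u true ρb ∧ ρa < ρb ∧ θ = ρa / ρb

/-- `θ` has the (infinite) continued fraction expansion `[0; a 1, a 2, a 3, …]`:
there are complete quotients' fractional parts `t n ∈ (0,1)` with `t 0 = θ` and
`1 / t n = a (n+1) + t (n+1)` for all `n`. (The value `a 0` is irrelevant.) -/
def HasCF (θ : ℝ) (a : ℕ → ℕ) : Prop :=
  ∃ t : ℕ → ℝ, t 0 = θ ∧ ∀ n, 0 < t n ∧ t n < 1 ∧ 1 / t n = (a (n + 1) : ℝ) + t (n + 1)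

/-- Number of positions `< n` where `u` takes the value `c`. -/
def countBefore (u : ℕ → Bool) (c : Bool) (n : ℕ) : ℕ :=
  ((List.range n).filter fun i => u i = c).length

/-- The colouring of a binary sequence `u` by `y` (on the `a = false` positions)
and `y'` (on the `b = true` positions). -/
def colour (u : ℕ → Bool) (y : ℕ → α) (y' : ℕ → β) : ℕ → α ⊕ β := fun n =>
  if u n = false then Sum.inl (y (countBefore u false n))
  else Sum.inr (y' (countBefore u true n))

/-- A constant gap sequence: periodic, and consecutive occurrences of each occurring
letter are at a constant distance. -/
def ConstantGap (y : ℕ → α) : Prop :=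
  (∃ p, 0 < p ∧ ∀ n, y (n + p) = y n) ∧
  ∀ c : α, (∃ i, y i = c) → ∃ g, 0 < g ∧ ∀ i j, ConsecOcc y c i j → j - i = g

/-- The discolouration (projection) map: letters of the first alphabet go to `a = false`,
letters of the second alphabet go to `b = true`. -/
def proj : α ⊕ β → Bool := Sum.elim (fun _ => false) (fun _ => true)

/-- `v` is a return word to `w` in the sequence `z`. -/
def IsReturnWord (z : ℕ → α) (w v : List α) : Prop :=
  ∃ i j : ℕ, i < j ∧ OccursAt z w i ∧ OccursAt z w j ∧
    (∀ k, i < k → k < j → ¬ OccursAt z w k) ∧ v = factorAt z i (j - i)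

def RightSpecial (z : ℕ → α) (w : List α) : Prop :=
  ∃ a b : α, a ≠ b ∧ IsFactor z (w ++ [a]) ∧ IsFactor z (w ++ [b])

def LeftSpecial (z : ℕ → α) (w : List α) : Prop :=
  ∃ a b : α, a ≠ b ∧ IsFactor z (a :: w) ∧ IsFactor z (b :: w)

def Bispecial (z : ℕ → α) (w : List α) : Prop := LeftSpecial z w ∧ RightSpecial z w

/-- `o` enumerates, in increasing order, all occurrences of `w` in `z`. -/
def IsOccEnum (z : ℕ → α) (w : List α) (o : ℕ → ℕ) : Prop :=
  StrictMono o ∧ (∀ n, OccursAt z w (o n)) ∧ ∀ i, OccursAt z w i → ∃ n, o n = i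

/-- The derived sequence of `z` with respect to the occurrence enumeration `o` of a factor:
its `n`-th letter is the return word between the `n`-th and `(n+1)`-st occurrences. -/
def derivedSeq (z : ℕ → α) (o : ℕ → ℕ) : ℕ → List α :=
  fun n => factorAt z (o n) (o (n + 1) - o n)

/-- The slope of a sequence over a two-letter alphabet:
the ratio of the smaller letter frequency to the larger one. -/
def HasSlope2 {γ : Type*} [DecidableEq γ] (z : ℕ → γ) (θ : ℝ) : Prop :=
  ∃ (c c' : γ) (ρ ρ' : ℝ), c ≠ c' ∧ (∀ n, z n = c ∨ z n = c') ∧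
    HasFreq z c ρ ∧ HasFreq z c' ρ' ∧ ρ < ρ' ∧ θ = ρ / ρ'

/-- The purely cyclic constant gap sequence `(0 1 ⋯ (δ-1))^ω` over `ZMod δ`. -/
def cyc (δ : ℕ) : ℕ → ZMod δ := fun n => (n : ZMod δ)

/-- The colouring `colour(u, (1 2 ⋯ δ)^ω, (1' 2' ⋯ δ')^ω)` over `2δ` letters. -/
def colourCyc (δ : ℕ) (u : ℕ → Bool) : ℕ → ZMod δ ⊕ ZMod δ := colour u (cyc δ) (cyc δ)


lemma factorAt_length (v : ℕ → α) (i n : ℕ) : (factorAt v i n).length = n := by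
  simp [factorAt]

lemma occursAt_getElem {v : ℕ → α} {w : List α} {i : ℕ} (h : OccursAt v w i)
    {k : ℕ} (hk : k < w.length) : w[k] = v (i + k) := by
  have h' := congrArg (fun l => l[k]?) h
  simp only [factorAt, List.getElem?_map, List.getElem?_range hk] at h'
  rw [List.getElem?_eq_getElem hk] at h'
  exact (Option.some_injective _ h').symm

lemma proj_colourCyc (δ : ℕ) (u : ℕ → Bool) (n : ℕ) : proj (colourCyc δ u n) = u n := by
  by_cases h : u n = false <;> simp [colourCyc, colour, proj, h] <;> simp_all

lemma isFactor_map_proj {δ : ℕ} {u : ℕ → Bool} {v : List (ZMod δ ⊕ ZMod δ)}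
    (h : IsFactor (colourCyc δ u) v) : IsFactor u (v.map proj) := by
  obtain ⟨i, hi⟩ := h
  refine ⟨i, ?_⟩
  have hmp : (factorAt (colourCyc δ u) i v.length).map proj = factorAt u i v.length := by
    simp only [factorAt, List.map_map]
    exact List.map_congr_left fun k _ => proj_colourCyc δ u (i + k)
  rw [List.length_map]
  conv_rhs => rw [← hi]
  exact hmp.symm

lemma countBefore_succ (u : ℕ → Bool) (c : Bool) (n : ℕ) :
    countBefore u c (n + 1) = countBefore u c n + if u n = c then 1 else 0 := by
  simp only [countBefore, List.range_succ, List.filter_append]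
  by_cases h : u n = c <;> simp [h]

lemma inl_val {δ : ℕ} {u : ℕ → Bool} {w : List (ZMod δ ⊕ ZMod δ)} {i k : ℕ}
    (h : OccursAt (colourCyc δ u) w i) (hk : k < w.length) {d : ZMod δ}
    (hd : w[k] = Sum.inl d) :
    u (i + k) = false ∧ d = (countBefore u false (i + k) : ZMod δ) := by
  rw [occursAt_getElem h hk] at hd
  by_cases hc : u (i + k) = false
  · simp [colourCyc, colour, cyc, hc] at hd
    exact ⟨hc, hd.symm⟩
  · simp [colourCyc, colour, hc] at hd

lemma inr_val {δ : ℕ} {u : ℕ → Bool} {w : List (ZMod δ ⊕ ZMod δ)} {i k : ℕ}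
    (h : OccursAt (colourCyc δ u) w i) (hk : k < w.length) {d : ZMod δ}
    (hd : w[k] = Sum.inr d) :
    u (i + k) = true ∧ d = (countBefore u true (i + k) : ZMod δ) := by
  rw [occursAt_getElem h hk] at hd
  by_cases hc : u (i + k) = false
  · simp [colourCyc, colour, hc] at hd
  · simp [colourCyc, colour, cyc, hc] at hd
    exact ⟨by simpa using hc, hd.symm⟩

lemma count_occ {δ : ℕ} {u : ℕ → Bool} {w : List (ZMod δ ⊕ ZMod δ)} {i : ℕ}
    (h : OccursAt (colourCyc δ u) w i) (c : Bool) :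
    ∀ k, k ≤ w.length →
      countBefore u c (i + k) = countBefore u c i + (w.take k).countP (fun s => proj s = c) := by
  intro k
  induction k with
  | zero => simp
  | succ k ih =>
    intro hk1
    have hk : k < w.length := hk1
    have hu : w[k] = colourCyc δ u (i + k) := occursAt_getElem h hk
    have hpr : proj (w[k]) = u (i + k) := by rw [hu, proj_colourCyc]
    have : i + (k + 1) = (i + k) + 1 := by omega
    rw [this, countBefore_succ, ih (le_of_lt hk)]
    rw [List.take_succ, List.getElem?_eq_getElem hk]
    simp only [Option.toList_some, List.countP_append, List.countP_singleton]
    rw [← hpr]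
    by_cases hp : proj (w[k]) = c <;> simp [hp] <;> omega

lemma leftVal_inl {δ : ℕ} {u : ℕ → Bool} {w : List (ZMod δ ⊕ ZMod δ)} {k : ℕ}
    (hk : k < w.length) {d : ZMod δ} (hwk : w[k] = Sum.inl d) {c : ZMod δ}
    (hf : IsFactor (colourCyc δ u) (Sum.inl c :: w)) :
    c = d - (((w.take k).countP fun s => proj s = false : ℕ) : ZMod δ) - 1 := by
  obtain ⟨i, hocc⟩ := hf
  have hocc : OccursAt (colourCyc δ u) (Sum.inl c :: w) i := hocc
  have hlen0 : 0 < (Sum.inl c :: w).length := by simp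
  have hc := inl_val hocc hlen0 rfl
  have hk1 : k + 1 < (Sum.inl c :: w).length := by simpa using Nat.succ_lt_succ hk
  have hwk1 : (Sum.inl c :: w)[k + 1] = Sum.inl d := by simpa using hwk
  have hdv := inl_val hocc hk1 hwk1
  have hcount := count_occ hocc false (k + 1) (by simp; omega)
  have htake : (Sum.inl c :: w).take (k + 1) = Sum.inl (α := ZMod δ) c :: w.take k := rfl
  rw [htake] at hcount
  have hcp : (Sum.inl (α := ZMod δ) c :: w.take k).countP (fun s => proj s = false)
      = (w.take k).countP (fun s => proj s = false) + 1 := by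
    rw [List.countP_cons]; simp [proj]
  rw [hcp] at hcount
  have e1 : c = (countBefore u false i : ZMod δ) := by simpa using hc.2
  have e2 : d = (countBefore u false (i + (k + 1)) : ZMod δ) := hdv.2
  rw [hcount] at e2
  push_cast at e2
  rw [e1, e2]; ring

lemma leftVal_inr {δ : ℕ} {u : ℕ → Bool} {w : List (ZMod δ ⊕ ZMod δ)} {k : ℕ}
    (hk : k < w.length) {d : ZMod δ} (hwk : w[k] = Sum.inr d) {c : ZMod δ}
    (hf : IsFactor (colourCyc δ u) (Sum.inr c :: w)) :
    c = d - (((w.take k).countP fun s => proj s = true : ℕ) : ZMod δ) - 1 := by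
  obtain ⟨i, hocc⟩ := hf
  have hocc : OccursAt (colourCyc δ u) (Sum.inr c :: w) i := hocc
  have hlen0 : 0 < (Sum.inr c :: w).length := by simp
  have hc := inr_val hocc hlen0 rfl
  have hk1 : k + 1 < (Sum.inr c :: w).length := by simpa using Nat.succ_lt_succ hk
  have hwk1 : (Sum.inr c :: w)[k + 1] = Sum.inr d := by simpa using hwk
  have hdv := inr_val hocc hk1 hwk1
  have hcount := count_occ hocc true (k + 1) (by simp; omega)
  have htake : (Sum.inr c :: w).take (k + 1) = Sum.inr (β := ZMod δ) c :: w.take k := rfl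
  rw [htake] at hcount
  have hcp : (Sum.inr (β := ZMod δ) c :: w.take k).countP (fun s => proj s = true)
      = (w.take k).countP (fun s => proj s = true) + 1 := by
    rw [List.countP_cons]; simp [proj]
  rw [hcp] at hcount
  have e1 : c = (countBefore u true i : ZMod δ) := by simpa using hc.2
  have e2 : d = (countBefore u true (i + (k + 1)) : ZMod δ) := hdv.2
  rw [hcount] at e2
  push_cast at e2
  rw [e1, e2]; ring

lemma rightVal_inl {δ : ℕ} {u : ℕ → Bool} {w : List (ZMod δ ⊕ ZMod δ)} {k : ℕ}
    (hk : k < w.length) {d : ZMod δ} (hwk : w[k] = Sum.inl d) {c : ZMod δ}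
    (hf : IsFactor (colourCyc δ u) (w ++ [Sum.inl c])) :
    c = d - (((w.take k).countP fun s => proj s = false : ℕ) : ZMod δ)
        + ((w.countP fun s => proj s = false : ℕ) : ZMod δ) := by
  obtain ⟨i, hocc⟩ := hf
  have hocc : OccursAt (colourCyc δ u) (w ++ [Sum.inl c]) i := hocc
  have hlenc : w.length < (w ++ [Sum.inl c]).length := by simp
  have hgc : (w ++ [Sum.inl (α := ZMod δ) c])[w.length] = Sum.inl c := by
    simp
  have hc := inl_val hocc hlenc hgc
  have hkc : k < (w ++ [Sum.inl c]).length := by simp; omega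
  have hwkc : (w ++ [Sum.inl (α := ZMod δ) c])[k] = Sum.inl d := by
    rw [List.getElem_append_left hk]; exact hwk
  have hdv := inl_val hocc hkc hwkc
  have hcount1 := count_occ hocc false k (by simp; omega)
  have hcount2 := count_occ hocc false w.length (by simp)
  have ht1 : (w ++ [Sum.inl (α := ZMod δ) c]).take k = w.take k :=
    List.take_append_of_le_length (le_of_lt hk)
  have ht2 : (w ++ [Sum.inl (α := ZMod δ) c]).take w.length = w :=
    List.take_left
  rw [ht1] at hcount1
  rw [ht2] at hcount2
  have e1 : c = (countBefore u false (i + w.length) : ZMod δ) := hc.2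
  have e2 : d = (countBefore u false (i + k) : ZMod δ) := hdv.2
  rw [hcount1] at e2
  rw [hcount2] at e1
  push_cast at e1 e2
  rw [e1, e2]; ring

lemma rightVal_inr {δ : ℕ} {u : ℕ → Bool} {w : List (ZMod δ ⊕ ZMod δ)} {k : ℕ}
    (hk : k < w.length) {d : ZMod δ} (hwk : w[k] = Sum.inr d) {c : ZMod δ}
    (hf : IsFactor (colourCyc δ u) (w ++ [Sum.inr c])) :
    c = d - (((w.take k).countP fun s => proj s = true : ℕ) : ZMod δ)
        + ((w.countP fun s => proj s = true : ℕ) : ZMod δ) := by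
  obtain ⟨i, hocc⟩ := hf
  have hocc : OccursAt (colourCyc δ u) (w ++ [Sum.inr c]) i := hocc
  have hlenc : w.length < (w ++ [Sum.inr c]).length := by simp
  have hgc : (w ++ [Sum.inr (β := ZMod δ) c])[w.length] = Sum.inr c := by
    simp
  have hc := inr_val hocc hlenc hgc
  have hkc : k < (w ++ [Sum.inr c]).length := by simp; omega
  have hwkc : (w ++ [Sum.inr (β := ZMod δ) c])[k] = Sum.inr d := by
    rw [List.getElem_append_left hk]; exact hwk
  have hdv := inr_val hocc hkc hwkc
  have hcount1 := count_occ hocc true k (by simp; omega)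
  have hcount2 := count_occ hocc true w.length (by simp)
  have ht1 : (w ++ [Sum.inr (β := ZMod δ) c]).take k = w.take k :=
    List.take_append_of_le_length (le_of_lt hk)
  have ht2 : (w ++ [Sum.inr (β := ZMod δ) c]).take w.length = w :=
    List.take_left
  rw [ht1] at hcount1
  rw [ht2] at hcount2
  have e1 : c = (countBefore u true (i + w.length) : ZMod δ) := hc.2
  have e2 : d = (countBefore u true (i + k) : ZMod δ) := hdv.2
  rw [hcount1] at e2
  rw [hcount2] at e1
  push_cast at e1 e2
  rw [e1, e2]; ring

theorem statement12 (δ : ℕ) (hδ : 1 ≤ δ) (u : ℕ → Bool) (hu : Sturmian u)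
    (w : List (ZMod δ ⊕ ZMod δ)) (hw : Bispecial (colourCyc δ u) w)
    (hπa : false ∈ w.map proj) (hπb : true ∈ w.map proj) :
    Bispecial u (w.map proj) := by
  obtain ⟨sa, hsam, hsap⟩ := List.mem_map.mp hπa
  obtain ⟨k, hk, hwk⟩ := List.getElem_of_mem hsam
  obtain ⟨d, hd⟩ : ∃ d, w[k] = Sum.inl d := by
    cases hs : sa with
    | inl d => exact ⟨d, by rw [hwk, hs]⟩
    | inr d => rw [hs] at hsap; simp [proj] at hsap
  obtain ⟨sb, hsbm, hsbp⟩ := List.mem_map.mp hπb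
  obtain ⟨k', hk', hwk'⟩ := List.getElem_of_mem hsbm
  obtain ⟨d', hd'⟩ : ∃ d', w[k'] = Sum.inr d' := by
    cases hs : sb with
    | inl e => rw [hs] at hsbp; simp [proj] at hsbp
    | inr e => exact ⟨e, by rw [hwk', hs]⟩
  obtain ⟨hL, hR⟩ := hw
  constructor
  · obtain ⟨a, b, hab, ha, hb⟩ := hL
    have hne : proj a ≠ proj b := by
      intro hpe
      apply hab
      match a, b, hpe with
      | Sum.inl c1, Sum.inl c2, _ =>
        rw [leftVal_inl hk hd ha, leftVal_inl hk hd hb]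
      | Sum.inl _, Sum.inr _, hpe => simp [proj] at hpe
      | Sum.inr _, Sum.inl _, hpe => simp [proj] at hpe
      | Sum.inr c1, Sum.inr c2, _ =>
        rw [leftVal_inr hk' hd' ha, leftVal_inr hk' hd' hb]
    exact ⟨proj a, proj b, hne,
      by simpa using isFactor_map_proj ha, by simpa using isFactor_map_proj hb⟩
  · obtain ⟨a, b, hab, ha, hb⟩ := hR
    have hne : proj a ≠ proj b := by
      intro hpe
      apply hab
      match a, b, hpe with
      | Sum.inl c1, Sum.inl c2, _ =>
        rw [rightVal_inl hk hd ha, rightVal_inl hk hd hb]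
      | Sum.inl _, Sum.inr _, hpe => simp [proj] at hpe
      | Sum.inr _, Sum.inl _, hpe => simp [proj] at hpe
      | Sum.inr c1, Sum.inr c2, _ =>
        rw [rightVal_inr hk' hd' ha, rightVal_inr hk' hd' hb]
    exact ⟨proj a, proj b, hne,
      by simpa using isFactor_map_proj ha, by simpa using isFactor_map_proj hb⟩

end BalancedCE
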